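/- (Minimum-norm characterization via source condition) Let Γ̄ = (Q̄,f̄,ḡ) ∈ I(Φ†) and suppose there exists w* ∈ (H^1_⋄(Ω))* with (U'_{Γ̄})* w* = Γ̄ (the adjoint of the Fréchet derivative of the solution map at Γ̄ applied to w* equals Γ̄, with Q̄ identified as an element of (L^∞_sym(Ω))* via integration). Then ⟨Γ̄, Γ − Γ̄⟩_{L²_sym × L² × L²(∂Ω)} = 0 for all Γ ∈ I(Φ†), and hence Γ̄ is the unique minimum-norm solution: ‖Γ̄‖ ≤ ‖Γ‖ for all Γ ∈ I(Φ†), with equality only for Γ = Γ̄. -/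
import Mathlib


open InnerProductSpace

/-- minimum-norm characterization via source condition: if
`Γ̄ ∈ I(Φ†)` satisfies the source condition `(U'_{Γ̄})* w* = Γ̄` (with `w*`
represented, via the equivalent inner product `[u,v] = ∫ Q̄∇u·∇v` on
`H¹_⋄(Ω)`, by some `W ∈ H¹_⋄(Ω)`), then `⟨Γ̄, Γ − Γ̄⟩ = 0` for all
`Γ ∈ I(Φ†)` and `Γ̄` is the unique minimum-norm solution. -/
theorem stmt13
    (Hd G L2 L2b MQ : Type*)
    [NormedAddCommGroup Hd] [InnerProductSpace ℝ Hd]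
    [NormedAddCommGroup G] [InnerProductSpace ℝ G]
    [NormedAddCommGroup L2] [InnerProductSpace ℝ L2]
    [NormedAddCommGroup L2b] [InnerProductSpace ℝ L2b]
    [NormedAddCommGroup MQ] [InnerProductSpace ℝ MQ]
    (grad : Hd →L[ℝ] G) (ι : Hd →L[ℝ] L2) (γ : Hd →L[ℝ] L2b)
    (QF : MQ →L[ℝ] G →L[ℝ] G →L[ℝ] ℝ)
    (Qad : Set MQ)
    (Had : Set (MQ × L2 × L2b)) (hHad : Had = {Γ | Γ.1 ∈ Qad})
    (Φdag : Hd)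
    -- `I(Φ†)`: admissible triples whose weak Neumann solution is `Φ†`
    (I : Set (MQ × L2 × L2b))
    (hI : I = {Γ ∈ Had | ∀ φ : Hd,
      QF Γ.1 (grad Φdag) (grad φ) = ⟪Γ.2.1, ι φ⟫_ℝ + ⟪Γ.2.2, γ φ⟫_ℝ})
    (Γbar : MQ × L2 × L2b) (hΓbar : Γbar ∈ I)
    -- `Dbar λ = U'_{Γ̄}(λ)`: the Fréchet derivative of the solution map at `Γ̄`
    (Dbar : (MQ × L2 × L2b) →L[ℝ] Hd)
    (hDbar : ∀ lam : MQ × L2 × L2b, ∀ φ : Hd,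
      QF Γbar.1 (grad (Dbar lam)) (grad φ)
        = - QF lam.1 (grad Φdag) (grad φ)
          + ⟪lam.2.1, ι φ⟫_ℝ + ⟪lam.2.2, γ φ⟫_ℝ)
    -- source condition `(U'_{Γ̄})* w* = Γ̄`, with `w*` represented by `W`
    (W : Hd)
    (hsource : ∀ lam : MQ × L2 × L2b,
      ⟪Γbar.1, lam.1⟫_ℝ + ⟪Γbar.2.1, lam.2.1⟫_ℝ + ⟪Γbar.2.2, lam.2.2⟫_ℝ
        = QF Γbar.1 (grad (Dbar lam)) (grad W)) :
    (∀ Γ ∈ I,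
        ⟪Γbar.1, Γ.1 - Γbar.1⟫_ℝ + ⟪Γbar.2.1, Γ.2.1 - Γbar.2.1⟫_ℝ
          + ⟪Γbar.2.2, Γ.2.2 - Γbar.2.2⟫_ℝ = 0) ∧
    (∀ Γ ∈ I,
        ‖Γbar.1‖ ^ 2 + ‖Γbar.2.1‖ ^ 2 + ‖Γbar.2.2‖ ^ 2
          ≤ ‖Γ.1‖ ^ 2 + ‖Γ.2.1‖ ^ 2 + ‖Γ.2.2‖ ^ 2 ∧
        (‖Γ.1‖ ^ 2 + ‖Γ.2.1‖ ^ 2 + ‖Γ.2.2‖ ^ 2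
            = ‖Γbar.1‖ ^ 2 + ‖Γbar.2.1‖ ^ 2 + ‖Γbar.2.2‖ ^ 2 → Γ = Γbar)) := by

  subst hI
  have key : ∀ Γ ∈ {Γ ∈ Had | ∀ φ : Hd,
      QF Γ.1 (grad Φdag) (grad φ) = ⟪Γ.2.1, ι φ⟫_ℝ + ⟪Γ.2.2, γ φ⟫_ℝ},
      ⟪Γbar.1, Γ.1 - Γbar.1⟫_ℝ + ⟪Γbar.2.1, Γ.2.1 - Γbar.2.1⟫_ℝ
        + ⟪Γbar.2.2, Γ.2.2 - Γbar.2.2⟫_ℝ = 0 := by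
    intro Γ hΓ
    obtain ⟨_, hΓw⟩ := hΓ
    obtain ⟨_, hΓbw⟩ := hΓbar
    have hlam : (Γ - Γbar).1 = Γ.1 - Γbar.1 ∧ (Γ - Γbar).2.1 = Γ.2.1 - Γbar.2.1
        ∧ (Γ - Γbar).2.2 = Γ.2.2 - Γbar.2.2 := ⟨rfl, rfl, rfl⟩
    have hzero : QF Γbar.1 (grad (Dbar (Γ - Γbar))) (grad W) = 0 := by
      have := hDbar (Γ - Γbar) W
      rw [this, hlam.1, hlam.2.1, hlam.2.2, map_sub]
      have h1 := hΓw W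
      have h2 := hΓbw W
      simp only [ContinuousLinearMap.sub_apply, inner_sub_left]
      linarith
    have := hsource (Γ - Γbar)
    rw [hzero] at this
    rw [hlam.1, hlam.2.1, hlam.2.2] at this
    exact this
  refine ⟨key, fun Γ hΓ => ?_⟩
  have h0 := key Γ hΓ
  have e1 : ‖Γ.1‖ ^ 2 = ‖Γbar.1‖ ^ 2 + 2 * ⟪Γbar.1, Γ.1 - Γbar.1⟫_ℝ + ‖Γ.1 - Γbar.1‖ ^ 2 := by
    have := norm_add_sq_real Γbar.1 (Γ.1 - Γbar.1)
    rwa [add_sub_cancel] at this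
  have e2 : ‖Γ.2.1‖ ^ 2 = ‖Γbar.2.1‖ ^ 2 + 2 * ⟪Γbar.2.1, Γ.2.1 - Γbar.2.1⟫_ℝ
      + ‖Γ.2.1 - Γbar.2.1‖ ^ 2 := by
    have := norm_add_sq_real Γbar.2.1 (Γ.2.1 - Γbar.2.1)
    rwa [add_sub_cancel] at this
  have e3 : ‖Γ.2.2‖ ^ 2 = ‖Γbar.2.2‖ ^ 2 + 2 * ⟪Γbar.2.2, Γ.2.2 - Γbar.2.2⟫_ℝ
      + ‖Γ.2.2 - Γbar.2.2‖ ^ 2 := by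
    have := norm_add_sq_real Γbar.2.2 (Γ.2.2 - Γbar.2.2)
    rwa [add_sub_cancel] at this
  have hsum : ‖Γ.1‖ ^ 2 + ‖Γ.2.1‖ ^ 2 + ‖Γ.2.2‖ ^ 2
      = ‖Γbar.1‖ ^ 2 + ‖Γbar.2.1‖ ^ 2 + ‖Γbar.2.2‖ ^ 2
        + (‖Γ.1 - Γbar.1‖ ^ 2 + ‖Γ.2.1 - Γbar.2.1‖ ^ 2 + ‖Γ.2.2 - Γbar.2.2‖ ^ 2) := by
    rw [e1, e2, e3]; linarith
  constructor
  · nlinarith [sq_nonneg ‖Γ.1 - Γbar.1‖, sq_nonneg ‖Γ.2.1 - Γbar.2.1‖,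
      sq_nonneg ‖Γ.2.2 - Γbar.2.2‖]
  · intro heq
    have hd : ‖Γ.1 - Γbar.1‖ ^ 2 + ‖Γ.2.1 - Γbar.2.1‖ ^ 2 + ‖Γ.2.2 - Γbar.2.2‖ ^ 2 = 0 := by
      linarith
    have hs1 : ‖Γ.1 - Γbar.1‖ ^ 2 = 0 := by
      have a := sq_nonneg ‖Γ.1 - Γbar.1‖
      have b := sq_nonneg ‖Γ.2.1 - Γbar.2.1‖
      have c := sq_nonneg ‖Γ.2.2 - Γbar.2.2‖
      linarith
    have hs2 : ‖Γ.2.1 - Γbar.2.1‖ ^ 2 = 0 := by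
      have a := sq_nonneg ‖Γ.1 - Γbar.1‖
      have b := sq_nonneg ‖Γ.2.1 - Γbar.2.1‖
      have c := sq_nonneg ‖Γ.2.2 - Γbar.2.2‖
      linarith
    have hs3 : ‖Γ.2.2 - Γbar.2.2‖ ^ 2 = 0 := by
      have a := sq_nonneg ‖Γ.1 - Γbar.1‖
      have b := sq_nonneg ‖Γ.2.1 - Γbar.2.1‖
      have c := sq_nonneg ‖Γ.2.2 - Γbar.2.2‖
      linarith
    have h1 : Γ.1 - Γbar.1 = 0 := norm_eq_zero.mp (pow_eq_zero_iff two_ne_zero |>.mp hs1)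
    have h2 : Γ.2.1 - Γbar.2.1 = 0 := norm_eq_zero.mp (pow_eq_zero_iff two_ne_zero |>.mp hs2)
    have h3 : Γ.2.2 - Γbar.2.2 = 0 := norm_eq_zero.mp (pow_eq_zero_iff two_ne_zero |>.mp hs3)
    have : Γ = Γbar := by
      ext
      · exact sub_eq_zero.mp h1
      · exact sub_eq_zero.mp h2
      · exact sub_eq_zero.mp h3
    exact this
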